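/- Fix an enumeration u₁, …, u₃₃ of the rays of the Peres set PS, and for each i let vᵢ ∈ ℂ³ be (the complexification of) a unit vector spanning uᵢ. Let Pᵢ^{green} be the orthogonal projection of ℂ³ onto the complex line spanned by vᵢ and Pᵢ^{red} = id − Pᵢ^{green}. For a colouring γ of PS define the operator T(γ) = P₃₃^{γ(u₃₃)} ∘ ⋯ ∘ P₂^{γ(u₂)} ∘ P₁^{γ(u₁)}, and for ψ ∈ ℂ³ and A ⊆ Ω define μ(A) = ‖ Σ_{γ ∈ A} T(γ)ψ ‖². Then for every ψ ∈ ℂ³, μ(A) = 0 whenever A is a PKS event, and μ(A) = 0 whenever A is a union of pairwise disjoint PKS events. -/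

import Mathlib

noncomputable section

/-- Vectors in `ℝ³`. -/
abbrev V3 : Type := Fin 3 → ℝ

/-- The standard inner product on `ℝ³`. -/
def dot3 (x y : V3) : ℝ := x 0 * y 0 + x 1 * y 1 + x 2 * y 2

/-- The multiset of absolute values of the coordinates of a vector in `ℝ³`. -/
def absCoords (x : V3) : Multiset ℝ := {|x 0|, |x 1|, |x 2|}

/-- The Peres set `PS`: the 33 rays (1-dimensional linear subspaces) of `ℝ³` spanned by
nonzero vectors whose multiset of absolute values of coordinates is one of
`{0,0,1}`, `{0,1,1}`, `{0,1,2}`, `{1,1,2}`. -/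
def PeresSet : Set (Submodule ℝ V3) :=
  {L | ∃ v : V3, v ≠ 0 ∧ L = Submodule.span ℝ {v} ∧
    (absCoords v = {0, 0, 1} ∨ absCoords v = {0, 1, 1} ∨
      absCoords v = {0, 1, 2} ∨ absCoords v = {1, 1, 2})}

/-- Two rays are orthogonal if their elements are orthogonal for the standard
inner product on `ℝ³`. -/
def RayOrtho (L M : Submodule ℝ V3) : Prop := ∀ x ∈ L, ∀ y ∈ M, dot3 x y = 0

/-- Three mutually orthogonal rays. -/
def MutuallyOrtho (L M N : Submodule ℝ V3) : Prop :=
  RayOrtho L M ∧ RayOrtho L N ∧ RayOrtho M N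

/-- The two colours. -/
inductive Colour : Type
  | green
  | red
deriving DecidableEq

/-- A colouring of the Peres set. -/
def Colouring : Type := {L : Submodule ℝ V3 // L ∈ PeresSet} → Colour

/-- The PKS events: subsets of the space `Ω` of colourings of the form
`R_B` (all three rays of a triple `B` of mutually orthogonal rays of `PS` coloured red)
or `G_P` (both rays of an orthogonal pair `P` in `PS` coloured green). -/
def IsPKSEvent (E : Set Colouring) : Prop :=
  (∃ u v w : {L : Submodule ℝ V3 // L ∈ PeresSet}, MutuallyOrtho u.1 v.1 w.1 ∧
      E = {γ : Colouring | γ u = Colour.red ∧ γ v = Colour.red ∧ γ w = Colour.red}) ∨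
  (∃ u v : {L : Submodule ℝ V3 // L ∈ PeresSet}, RayOrtho u.1 v.1 ∧
      E = {γ : Colouring | γ u = Colour.green ∧ γ v = Colour.green})

/-- The multiplicative co-event `A*` with support `A`: `A*(B) = 1` iff `A ⊆ B`. -/
def coevent (A : Set Colouring) : Set Colouring → ZMod 2 :=
  open scoped Classical in fun B => if A ⊆ B then 1 else 0


/-- The orthogonal projection of `ℂ³` onto the complex line spanned by `x`,
as an operator on `ℂ³`. -/
def lineProj (x : EuclideanSpace ℂ (Fin 3)) :
    EuclideanSpace ℂ (Fin 3) →L[ℂ] EuclideanSpace ℂ (Fin 3) :=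
  (ℂ ∙ x).subtypeL.comp (Submodule.orthogonalProjectionOnto (ℂ ∙ x))

/-- `P^{green}` is the projection onto the line spanned by `x`; `P^{red} = id − P^{green}`. -/
def colourProj (x : EuclideanSpace ℂ (Fin 3)) :
    Colour → (EuclideanSpace ℂ (Fin 3) →L[ℂ] EuclideanSpace ℂ (Fin 3))
  | Colour.green => lineProj x
  | Colour.red => 1 - lineProj x

/-- The class operator `T(γ) = P₃₃^{γ(u₃₃)} ∘ ⋯ ∘ P₂^{γ(u₂)} ∘ P₁^{γ(u₁)}` of a
colouring `γ`, for an enumeration `u` of the Peres set with unit spanning vectors `v`. -/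
def classOp (u : Fin 33 → {L : Submodule ℝ V3 // L ∈ PeresSet})
    (v : Fin 33 → EuclideanSpace ℂ (Fin 3)) (γ : Colouring) :
    EuclideanSpace ℂ (Fin 3) →L[ℂ] EuclideanSpace ℂ (Fin 3) :=
  (List.ofFn fun i : Fin 33 => colourProj (v i) (γ (u i))).reverse.prod

/-- The quantal measure `μ(A) = ‖Σ_{γ ∈ A} T(γ)ψ‖²` of an event `A ⊆ Ω`. -/
def quantalMeasure (u : Fin 33 → {L : Submodule ℝ V3 // L ∈ PeresSet})
    (v : Fin 33 → EuclideanSpace ℂ (Fin 3)) (ψ : EuclideanSpace ℂ (Fin 3))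
    (A : Set Colouring) : ℝ :=
  ‖∑ᶠ γ ∈ A, classOp u v γ ψ‖ ^ 2


/-! ### Auxiliary material for the proof -/

open scoped ComplexInnerProductSpace

instance : Fintype Colour := ⟨{Colour.green, Colour.red}, fun x => by cases x <;> simp⟩

lemma sum_colour {M : Type*} [AddCommMonoid M] (f : Colour → M) :
    ∑ c : Colour, f c = f Colour.green + f Colour.red := by
  rw [show (Finset.univ : Finset Colour) = {Colour.green, Colour.red} from rfl,
    Finset.sum_pair (by simp)]

open Classical in
lemma sum_constrained {M : Type*} [Semiring M] :
    ∀ (n : ℕ) (A : Fin n → Colour → M) (b : Fin n → Option Colour),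
      (∑ g : Fin n → Colour,
        if ∀ i, ∀ a ∈ b i, g i = a then (List.ofFn fun i => A i (g i)).reverse.prod else 0)
      = (List.ofFn fun i => (b i).elim (A i Colour.green + A i Colour.red) (A i)).reverse.prod := by
  intro n
  induction n with
  | zero => intro A b; simp
  | succ n ih =>
    intro A b
    have hrev : ∀ f : Fin (n+1) → M,
        (List.ofFn f).reverse.prod = (List.ofFn fun i => f i.succ).reverse.prod * f 0 := by
      intro f
      rw [List.ofFn_succ, List.reverse_cons, List.prod_append, List.prod_singleton]
    rw [← Equiv.sum_comp (Fin.consEquiv fun _ => Colour), Fintype.sum_prod_type]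
    have hcond : ∀ (x : Colour) (h : Fin n → Colour),
        (∀ i, ∀ a ∈ b i, Fin.cons (α := fun _ => Colour) x h i = a)
        ↔ ((∀ a ∈ b 0, x = a) ∧ ∀ i : Fin n, ∀ a ∈ b i.succ, h i = a) := by
      intro x h
      constructor
      · intro H
        exact ⟨fun a ha => by simpa using H 0 a ha, fun i a ha => by simpa using H i.succ a ha⟩
      · rintro ⟨H0, H1⟩ i
        refine Fin.cases ?_ ?_ i
        · intro a ha; simpa using H0 a ha
        · intro j a ha; simpa using H1 j a ha
    have hsummand : ∀ (x : Colour) (h : Fin n → Colour),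
        (if ∀ i, ∀ a ∈ b i, (Fin.consEquiv fun _ => Colour) (x, h) i = a
          then (List.ofFn fun i => A i ((Fin.consEquiv fun _ => Colour) (x, h) i)).reverse.prod
          else 0)
        = (if ∀ i : Fin n, ∀ a ∈ b i.succ, h i = a
            then (List.ofFn fun i => A i.succ (h i)).reverse.prod else 0)
          * (if ∀ a ∈ b 0, x = a then A 0 x else 0) := by
      intro x h
      have hp : (List.ofFn fun i => A i (Fin.cons (α := fun _ => Colour) x h i)).reverse.prod
          = (List.ofFn fun i => A i.succ (h i)).reverse.prod * A 0 x := by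
        simpa using hrev (fun i => A i (Fin.cons (α := fun _ => Colour) x h i))
      show (if ∀ i, ∀ a ∈ b i, Fin.cons (α := fun _ => Colour) x h i = a
          then (List.ofFn fun i => A i (Fin.cons (α := fun _ => Colour) x h i)).reverse.prod
          else 0) = _
      rw [if_congr (hcond x h) rfl rfl, hp]
      by_cases h0 : ∀ a ∈ b 0, x = a
      · by_cases h1 : ∀ i : Fin n, ∀ a ∈ b i.succ, h i = a
        · rw [if_pos ⟨h0, h1⟩, if_pos h0, if_pos h1]
        · rw [if_neg (fun hc => h1 hc.2), if_neg h1, zero_mul]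
      · rw [if_neg (fun hc => h0 hc.1), if_neg h0, mul_zero]
    simp only [hsummand]
    simp only [← Finset.sum_mul]
    rw [ih (fun i c => A i.succ c) (fun i => b i.succ)]
    rw [hrev (fun i => (b i).elim (A i Colour.green + A i Colour.red) (A i))]
    rw [← Finset.mul_sum]
    congr 1
    cases hb : b 0 with
    | none => simp [hb]; exact sum_colour (A 0)
    | some a =>
      rw [sum_colour]
      cases a <;> simp

lemma multiset_noncommProd_congr {M : Type*} [Monoid M] {m₁ m₂ : Multiset M} (h : m₁ = m₂)
    (c₁ : {x | x ∈ m₁}.Pairwise Commute) :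
    m₁.noncommProd c₁ = m₂.noncommProd (h ▸ c₁) := by subst h; rfl

lemma ofFn_reverse_prod_eq_noncommProd {M : Type*} [Monoid M] {n : ℕ} (Q : Fin n → M)
    (hc : ∀ i j, Commute (Q i) (Q j)) :
    (List.ofFn Q).reverse.prod
      = Finset.univ.noncommProd Q (fun i _ j _ _ => hc i j) := by
  have c1 : {x | x ∈ ((List.ofFn Q).reverse : Multiset M)}.Pairwise Commute := by
    intro x hx y hy _
    simp only [Set.mem_setOf_eq, Multiset.mem_coe, List.mem_reverse, List.mem_ofFn,
      Set.mem_range] at hx hy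
    obtain ⟨i, rfl⟩ := hx; obtain ⟨j, rfl⟩ := hy; exact hc i j
  rw [← Multiset.noncommProd_coe _ c1]
  have hm : ((List.ofFn Q).reverse : Multiset M) = Finset.univ.val.map Q := by
    rw [Multiset.coe_reverse]; exact (Fin.univ_val_map Q).symm
  rw [multiset_noncommProd_congr hm]
  rfl

lemma ofFn_reverse_prod_support {M : Type*} [Monoid M] {n : ℕ} (Q : Fin n → M)
    (s : Finset (Fin n)) (hc : ∀ i j, Commute (Q i) (Q j)) (h1 : ∀ i ∉ s, Q i = 1) :
    (List.ofFn Q).reverse.prod = s.noncommProd Q (fun i _ j _ _ => hc i j) := by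
  classical
  erw [ofFn_reverse_prod_eq_noncommProd Q hc,
    Finset.noncommProd_congr (s.union_compl).symm (fun x _ => rfl)
      (by intro i _ j _ _; exact hc i j),
    Finset.noncommProd_union_of_disjoint disjoint_compl_right]
  have : sᶜ.noncommProd Q (fun i hi j hj h => hc i j) = 1 := by
    refine Finset.noncommProd_induction _ _ _ (fun x => x = 1)
      (fun a b ha hb => by rw [ha, hb, mul_one]) rfl ?_
    intro x hx
    exact h1 x (Finset.mem_compl.mp hx)
  rw [this, mul_one]

lemma lineProj_apply (x : EuclideanSpace ℂ (Fin 3)) (hx : ‖x‖ = 1)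
    (y : EuclideanSpace ℂ (Fin 3)) : lineProj x y = ⟪x, y⟫ • x := by
  simp [lineProj, Submodule.coe_orthogonalProjectionOnto_apply, Submodule.starProjection_unit_singleton, hx]

lemma lineProj_comp_zero (x y : EuclideanSpace ℂ (Fin 3)) (hx : ‖x‖ = 1) (hy : ‖y‖ = 1)
    (hxy : ⟪x, y⟫ = 0) : lineProj x * lineProj y = 0 := by
  ext z
  simp [ContinuousLinearMap.mul_apply, lineProj_apply y hy, lineProj_apply x hx,
    inner_smul_right, hxy]

lemma sum_lineProj (x y z : EuclideanSpace ℂ (Fin 3)) (hx : ‖x‖ = 1) (hy : ‖y‖ = 1)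
    (hz : ‖z‖ = 1) (hxy : ⟪x, y⟫ = 0) (hxz : ⟪x, z⟫ = 0) (hyz : ⟪y, z⟫ = 0) :
    lineProj x + lineProj y + lineProj z = 1 := by
  set w : Fin 3 → EuclideanSpace ℂ (Fin 3) := ![x, y, z] with hw
  have hon : Orthonormal ℂ w := by
    rw [orthonormal_iff_ite]
    have hyx : ⟪y, x⟫ = 0 := inner_eq_zero_symm.mp hxy
    have hzx : ⟪z, x⟫ = 0 := inner_eq_zero_symm.mp hxz
    have hzy : ⟪z, y⟫ = 0 := inner_eq_zero_symm.mp hyz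
    intro i j
    fin_cases i <;> fin_cases j <;>
      simp [w, inner_self_eq_norm_sq_to_K, hx, hy, hz, hxy, hxz, hyz, hyx, hzx, hzy]
  have hspan : ⊤ ≤ Submodule.span ℂ (Set.range w) := by
    rw [hon.linearIndependent.span_eq_top_of_card_eq_finrank (by simp)]
  let B : OrthonormalBasis (Fin 3) ℂ (EuclideanSpace ℂ (Fin 3)) :=
    OrthonormalBasis.mk hon hspan
  refine ContinuousLinearMap.ext fun ψ => ?_
  have hr := B.sum_repr' ψ
  rw [Fin.sum_univ_three] at hr
  have hB : ∀ i, B i = w i := fun i => by rw [OrthonormalBasis.coe_mk]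
  rw [hB 0, hB 1, hB 2] at hr
  simp only [hw, Matrix.cons_val_zero, Matrix.cons_val_one, Matrix.head_cons,
    Matrix.cons_val_two, Matrix.tail_cons] at hr
  simp only [ContinuousLinearMap.add_apply, ContinuousLinearMap.one_apply,
    lineProj_apply x hx, lineProj_apply y hy, lineProj_apply z hz]
  exact hr

lemma triple_lineProj_zero (x y z : EuclideanSpace ℂ (Fin 3)) (hx : ‖x‖ = 1) (hy : ‖y‖ = 1)
    (hz : ‖z‖ = 1) (hxy : ⟪x, y⟫ = 0) (hxz : ⟪x, z⟫ = 0) (hyz : ⟪y, z⟫ = 0) :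
    (1 - lineProj x) * ((1 - lineProj y) * (1 - lineProj z)) = 0 := by
  have pxy := lineProj_comp_zero x y hx hy hxy
  have pxz := lineProj_comp_zero x z hx hz hxz
  have pyz := lineProj_comp_zero y z hy hz hyz
  have hsum := sum_lineProj x y z hx hy hz hxy hxz hyz
  have expand : (1 - lineProj x) * ((1 - lineProj y) * (1 - lineProj z))
      = 1 - (lineProj x + lineProj y + lineProj z)
        + (lineProj x * lineProj y + lineProj x * lineProj z + lineProj y * lineProj z)
        - lineProj x * (lineProj y * lineProj z) := by
    simp only [mul_sub, sub_mul, one_mul, mul_one]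
    abel
  rw [expand, pxy, pxz, pyz, hsum]
  simp

lemma colourProj_green_add_red (x : EuclideanSpace ℂ (Fin 3)) :
    colourProj x Colour.green + colourProj x Colour.red = 1 := by
  show lineProj x + (1 - lineProj x) = 1
  abel


open Classical in
lemma sum_constrained_apply (n : ℕ)
    (A : Fin n → Colour → (EuclideanSpace ℂ (Fin 3) →L[ℂ] EuclideanSpace ℂ (Fin 3)))
    (b : Fin n → Option Colour) (ψ : EuclideanSpace ℂ (Fin 3)) :
    (∑ g : Fin n → Colour,
      if ∀ i, ∀ a ∈ b i, g i = a then (List.ofFn fun i => A i (g i)).reverse.prod ψ else 0)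
    = ((List.ofFn fun i =>
        (b i).elim (A i Colour.green + A i Colour.red) (A i)).reverse.prod) ψ := by
  have hg : ∀ g : Fin n → Colour,
      (if ∀ i, ∀ a ∈ b i, g i = a then (List.ofFn fun i => A i (g i)).reverse.prod ψ else 0)
      = (if ∀ i, ∀ a ∈ b i, g i = a
          then (List.ofFn fun i => A i (g i)).reverse.prod else 0) ψ := by
    intro g
    by_cases h : ∀ i, ∀ a ∈ b i, g i = a
    · rw [if_pos h, if_pos h]
    · rw [if_neg h, if_neg h, ContinuousLinearMap.zero_apply]
  rw [Finset.sum_congr rfl (fun g _ => hg g), ← ContinuousLinearMap.sum_apply,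
    sum_constrained n A b]
/-- The basic factorisation: the (fin)sum of `T(γ)ψ` over the event described by a
constraint function `bfun` equals the corresponding product operator applied to `ψ`. -/
lemma finsum_event (u : Fin 33 → {L : Submodule ℝ V3 // L ∈ PeresSet})
    (hu : Function.Bijective u) (v : Fin 33 → EuclideanSpace ℂ (Fin 3))
    (ψ : EuclideanSpace ℂ (Fin 3)) (bfun : Fin 33 → Option Colour) :
    ∑ᶠ γ ∈ {γ : Colouring | ∀ i, ∀ x ∈ bfun i, γ (u i) = x}, classOp u v γ ψ
      = ((List.ofFn fun i =>
          (bfun i).elim (colourProj (v i) Colour.green + colourProj (v i) Colour.red)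
            (colourProj (v i))).reverse.prod) ψ := by
  classical
  haveI : Fintype {L : Submodule ℝ V3 // L ∈ PeresSet} := Fintype.ofBijective u hu
  haveI : Fintype Colouring :=
    inferInstanceAs (Fintype ({L : Submodule ℝ V3 // L ∈ PeresSet} → Colour))
  set S : Set Colouring := {γ | ∀ i, ∀ x ∈ bfun i, γ (u i) = x} with hSdef
  have hfin : S = ↑(Finset.univ.filter (· ∈ S)) := by ext γ; simp
  rw [hfin, finsum_mem_coe_finset, Finset.sum_filter]
  set e := Equiv.ofBijective u hu with he
  set Ψ : (Fin 33 → Colour) ≃ Colouring := Equiv.arrowCongr e (Equiv.refl Colour) with hΨ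
  rw [← Equiv.sum_comp Ψ]
  have hΨu : ∀ (g : Fin 33 → Colour) (i : Fin 33), Ψ g (u i) = g i := by
    intro g i
    show g (e.symm (u i)) = g i
    exact congrArg g (e.symm_apply_apply i)
  have hterm : ∀ g : Fin 33 → Colour,
      (if Ψ g ∈ S then classOp u v (Ψ g) ψ else 0)
      = (if ∀ i, ∀ x ∈ bfun i, g i = x
          then (List.ofFn fun i => colourProj (v i) (g i)).reverse.prod ψ else 0) := by
    intro g
    have hcnd : (Ψ g ∈ S) ↔ (∀ i, ∀ x ∈ bfun i, g i = x) := by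
      constructor
      · intro H i x hx
        have := H i x hx
        rwa [hΨu] at this
      · intro H i x hx
        rw [hΨu]
        exact H i x hx
    have hT : classOp u v (Ψ g)
        = (List.ofFn fun i => colourProj (v i) (g i)).reverse.prod := by
      unfold classOp
      have hfn : (fun i => colourProj (v i) (Ψ g (u i))) = fun i => colourProj (v i) (g i) := by
        funext i
        rw [hΨu]
      rw [hfn]
    exact if_congr hcnd (by rw [hT]) rfl
  rw [Finset.sum_congr rfl (fun g _ => hterm g)]
  exact sum_constrained_apply 33 (fun i c => colourProj (v i) c) bfun ψ

/-- For any enumeration `u₁, …, u₃₃` of the Peres set, any choice of complexified unit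
spanning vectors `vᵢ`, and any initial state `ψ ∈ ℂ³`, the quantal measure
`μ(A) = ‖Σ_{γ ∈ A} T(γ)ψ‖²` vanishes on every PKS event and on every union of pairwise
disjoint PKS events. -/
theorem stmt13_pks_events_have_measure_zero
    (u : Fin 33 → {L : Submodule ℝ V3 // L ∈ PeresSet}) (hu : Function.Bijective u)
    (v : Fin 33 → EuclideanSpace ℂ (Fin 3))
    (hv : ∀ i : Fin 33, ‖v i‖ = 1 ∧
      ∃ w : V3, w ≠ 0 ∧ (u i).1 = Submodule.span ℝ {w} ∧ ∀ j : Fin 3, v i j = (w j : ℂ))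
    (ψ : EuclideanSpace ℂ (Fin 3)) :
    (∀ E : Set Colouring, IsPKSEvent E → quantalMeasure u v ψ E = 0) ∧
    (∀ 𝓕 : Set (Set Colouring), (∀ E ∈ 𝓕, IsPKSEvent E) → 𝓕.Pairwise Disjoint →
      quantalMeasure u v ψ (⋃₀ 𝓕) = 0) := by
  classical
  haveI : Fintype {L : Submodule ℝ V3 // L ∈ PeresSet} := Fintype.ofBijective u hu
  haveI : Fintype Colouring :=
    inferInstanceAs (Fintype ({L : Submodule ℝ V3 // L ∈ PeresSet} → Colour))
  set e := Equiv.ofBijective u hu with he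
  have hnorm : ∀ i, ‖v i‖ = 1 := fun i => (hv i).1
  -- orthogonality of rays gives orthogonality of the complex unit vectors
  have hinner : ∀ i j : Fin 33, RayOrtho (u i).1 (u j).1 → ⟪v i, v j⟫ = 0 := by
    intro i j hij
    obtain ⟨wi, hwi0, hwi, hvi⟩ := (hv i).2
    obtain ⟨wj, hwj0, hwj, hvj⟩ := (hv j).2
    have h0 : dot3 wi wj = 0 :=
      hij wi (hwi ▸ Submodule.mem_span_singleton_self wi)
        wj (hwj ▸ Submodule.mem_span_singleton_self wj)
    have : ⟪v i, v j⟫ = ((dot3 wi wj : ℝ) : ℂ) := by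
      simp only [PiLp.inner_apply, RCLike.inner_apply, Fin.sum_univ_three, hvi, hvj,
        dot3, Complex.ofReal_add, Complex.ofReal_mul]
      simp [Complex.conj_ofReal]
      ring
    rw [this, h0, Complex.ofReal_zero]
  have hsymm : ∀ L M : Submodule ℝ V3, RayOrtho L M → RayOrtho M L := by
    intro L M h x hx y hy
    have := h y hy x hx
    rwa [show dot3 y x = dot3 x y from by unfold dot3; ring] at this
  have hne : ∀ i j : Fin 33, RayOrtho (u i).1 (u j).1 → i ≠ j := by
    intro i j hij hEq
    subst hEq
    have h0 := hinner i i hij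
    rw [inner_self_eq_norm_sq_to_K, hnorm i] at h0
    norm_num at h0
  have main : ∀ E : Set Colouring, IsPKSEvent E → (∑ᶠ γ ∈ E, classOp u v γ ψ) = 0 := by
    intro E hE
    rcases hE with ⟨a, b, c, ⟨hab, hac, hbc⟩, rfl⟩ | ⟨a, b, hab, rfl⟩
    · -- triple of mutually orthogonal rays, all red
      set ia := e.symm a with hia
      set ib := e.symm b with hib
      set ic := e.symm c with hic
      have hua : u ia = a := e.apply_symm_apply a
      have hub : u ib = b := e.apply_symm_apply b
      have huc : u ic = c := e.apply_symm_apply c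
      have oab : RayOrtho (u ia).1 (u ib).1 := by rw [hua, hub]; exact hab
      have oac : RayOrtho (u ia).1 (u ic).1 := by rw [hua, huc]; exact hac
      have obc : RayOrtho (u ib).1 (u ic).1 := by rw [hub, huc]; exact hbc
      have nab : ia ≠ ib := hne _ _ oab
      have nac : ia ≠ ic := hne _ _ oac
      have nbc : ib ≠ ic := hne _ _ obc
      have iab : ⟪v ia, v ib⟫ = 0 := hinner _ _ oab
      have iac : ⟪v ia, v ic⟫ = 0 := hinner _ _ oac
      have ibc : ⟪v ib, v ic⟫ = 0 := hinner _ _ obc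
      set bfun : Fin 33 → Option Colour :=
        fun i => if i = ia ∨ i = ib ∨ i = ic then some Colour.red else none with hbfun
      have hset : {γ : Colouring | γ a = Colour.red ∧ γ b = Colour.red ∧ γ c = Colour.red}
          = {γ : Colouring | ∀ i, ∀ x ∈ bfun i, γ (u i) = x} := by
        ext γ
        simp only [Set.mem_setOf_eq]
        constructor
        · rintro ⟨h1, h2, h3⟩ i x hx
          by_cases hi : i = ia ∨ i = ib ∨ i = ic
          · have hx' : x = Colour.red := by
              rw [hbfun] at hx
              simp [hi] at hx
              exact hx.symm
            subst hx'
            rcases hi with rfl | rfl | rfl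
            · rw [hua]; exact h1
            · rw [hub]; exact h2
            · rw [huc]; exact h3
          · rw [hbfun] at hx
            simp [hi] at hx
        · intro H
          refine ⟨?_, ?_, ?_⟩
          · rw [← hua]; exact H ia Colour.red (by simp [hbfun])
          · rw [← hub]; exact H ib Colour.red (by simp [hbfun])
          · rw [← huc]; exact H ic Colour.red (by simp [hbfun])
      rw [hset, finsum_event u hu v ψ bfun]
      set Q : Fin 33 → (EuclideanSpace ℂ (Fin 3) →L[ℂ] EuclideanSpace ℂ (Fin 3)) :=
        fun i => if i = ia ∨ i = ib ∨ i = ic then 1 - lineProj (v i) else 1 with hQ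
      have hfQ : (fun i =>
          (bfun i).elim (colourProj (v i) Colour.green + colourProj (v i) Colour.red)
            (colourProj (v i))) = Q := by
        funext i
        by_cases hi : i = ia ∨ i = ib ∨ i = ic
        · simp only [hbfun, hQ, if_pos hi]
          rfl
        · simp only [hbfun, hQ, if_neg hi]
          exact colourProj_green_add_red (v i)
      rw [hfQ]
      have hPzero : ∀ p q : Fin 33, (p = ia ∨ p = ib ∨ p = ic) → (q = ia ∨ q = ib ∨ q = ic) →
          p ≠ q → lineProj (v p) * lineProj (v q) = 0 := by
        intro p q hp hq hpq
        refine lineProj_comp_zero _ _ (hnorm p) (hnorm q) ?_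
        rcases hp with rfl | rfl | rfl <;> rcases hq with rfl | rfl | rfl <;>
          first
            | exact absurd rfl hpq
            | assumption
            | (rw [inner_eq_zero_symm]; assumption)
      have hcomm : ∀ i j, Commute (Q i) (Q j) := by
        intro i j
        rcases eq_or_ne i j with rfl | hij
        · exact Commute.refl _
        · by_cases hi : i = ia ∨ i = ib ∨ i = ic
          · by_cases hj : j = ia ∨ j = ib ∨ j = ic
            · have cpq : Commute (lineProj (v i)) (lineProj (v j)) := by
                unfold Commute SemiconjBy
                rw [hPzero i j hi hj hij, hPzero j i hj hi hij.symm]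
              simp only [hQ, if_pos hi, if_pos hj]
              exact (Commute.one_left _).sub_left
                ((Commute.one_right _).sub_right cpq)
            · simp only [hQ, if_neg hj]
              exact Commute.one_right _
          · simp only [hQ, if_neg hi]
            exact Commute.one_left _
      rw [ofFn_reverse_prod_support Q {ia, ib, ic} hcomm
        (fun i hi => by
          simp only [Finset.mem_insert, Finset.mem_singleton] at hi
          simp only [hQ, if_neg hi])]
      have hval : ({ia, ib, ic} : Finset (Fin 33)).noncommProd Q
          (fun i _ j _ _ => hcomm i j)
          = (1 - lineProj (v ia)) * ((1 - lineProj (v ib)) * (1 - lineProj (v ic))) := by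
        erw [Finset.noncommProd_insert_of_notMem {ib, ic} ia Q _ (by simp [nab, nac]),
          Finset.noncommProd_insert_of_notMem {ic} ib Q _ (by simp [nbc]),
          Finset.noncommProd_singleton]
        simp [hQ]
      rw [hval, triple_lineProj_zero _ _ _ (hnorm ia) (hnorm ib) (hnorm ic) iab iac ibc]
      simp
    · -- orthogonal pair, both green
      set ia := e.symm a with hia
      set ib := e.symm b with hib
      have hua : u ia = a := e.apply_symm_apply a
      have hub : u ib = b := e.apply_symm_apply b
      have oab : RayOrtho (u ia).1 (u ib).1 := by rw [hua, hub]; exact hab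
      have nab : ia ≠ ib := hne _ _ oab
      have iab : ⟪v ia, v ib⟫ = 0 := hinner _ _ oab
      set bfun : Fin 33 → Option Colour :=
        fun i => if i = ia ∨ i = ib then some Colour.green else none with hbfun
      have hset : {γ : Colouring | γ a = Colour.green ∧ γ b = Colour.green}
          = {γ : Colouring | ∀ i, ∀ x ∈ bfun i, γ (u i) = x} := by
        ext γ
        simp only [Set.mem_setOf_eq]
        constructor
        · rintro ⟨h1, h2⟩ i x hx
          by_cases hi : i = ia ∨ i = ib
          · have hx' : x = Colour.green := by
              rw [hbfun] at hx
              simp [hi] at hx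
              exact hx.symm
            subst hx'
            rcases hi with rfl | rfl
            · rw [hua]; exact h1
            · rw [hub]; exact h2
          · rw [hbfun] at hx
            simp [hi] at hx
        · intro H
          refine ⟨?_, ?_⟩
          · rw [← hua]; exact H ia Colour.green (by simp [hbfun])
          · rw [← hub]; exact H ib Colour.green (by simp [hbfun])
      rw [hset, finsum_event u hu v ψ bfun]
      set Q : Fin 33 → (EuclideanSpace ℂ (Fin 3) →L[ℂ] EuclideanSpace ℂ (Fin 3)) :=
        fun i => if i = ia ∨ i = ib then lineProj (v i) else 1 with hQ
      have hfQ : (fun i =>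
          (bfun i).elim (colourProj (v i) Colour.green + colourProj (v i) Colour.red)
            (colourProj (v i))) = Q := by
        funext i
        by_cases hi : i = ia ∨ i = ib
        · simp only [hbfun, hQ, if_pos hi]
          rfl
        · simp only [hbfun, hQ, if_neg hi]
          exact colourProj_green_add_red (v i)
      rw [hfQ]
      have hPzero : ∀ p q : Fin 33, (p = ia ∨ p = ib) → (q = ia ∨ q = ib) →
          p ≠ q → lineProj (v p) * lineProj (v q) = 0 := by
        intro p q hp hq hpq
        refine lineProj_comp_zero _ _ (hnorm p) (hnorm q) ?_
        rcases hp with rfl | rfl <;> rcases hq with rfl | rfl <;>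
          first
            | exact absurd rfl hpq
            | assumption
            | (rw [inner_eq_zero_symm]; assumption)
      have hcomm : ∀ i j, Commute (Q i) (Q j) := by
        intro i j
        rcases eq_or_ne i j with rfl | hij
        · exact Commute.refl _
        · by_cases hi : i = ia ∨ i = ib
          · by_cases hj : j = ia ∨ j = ib
            · simp only [hQ, if_pos hi, if_pos hj]
              unfold Commute SemiconjBy
              rw [hPzero i j hi hj hij, hPzero j i hj hi hij.symm]
            · simp only [hQ, if_neg hj]
              exact Commute.one_right _
          · simp only [hQ, if_neg hi]
            exact Commute.one_left _
      rw [ofFn_reverse_prod_support Q {ia, ib} hcomm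
        (fun i hi => by
          simp only [Finset.mem_insert, Finset.mem_singleton] at hi
          simp only [hQ, if_neg hi])]
      have hval : ({ia, ib} : Finset (Fin 33)).noncommProd Q (fun i _ j _ _ => hcomm i j)
          = lineProj (v ia) * lineProj (v ib) := by
        erw [Finset.noncommProd_insert_of_notMem {ib} ia Q _ (by simp [nab]),
          Finset.noncommProd_singleton]
        simp [hQ]
      rw [hval, lineProj_comp_zero _ _ (hnorm ia) (hnorm ib) iab]
      simp
  constructor
  · intro E hE
    unfold quantalMeasure
    rw [main E hE]
    simp
  · intro 𝓕 h1 h2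
    unfold quantalMeasure
    rw [finsum_mem_sUnion (fun x hx y hy hxy => h2 hx hy hxy) (Set.toFinite 𝓕)
      (fun x _ => Set.toFinite x)]
    rw [finsum_mem_congr rfl (fun E hE => main E (h1 E hE))]
    simp

end
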